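/- Let p be an odd prime, n ≥ 2, and G = (Z_{p^n} × Z_{p^n}) ⋊ Z_{p^{n-1}} with x acting by c ↦ c^{1+p}. Then for every automorphism φ of G and every c ∈ A = Z_{p^n} × Z_{p^n}, the element c⁻¹ φ(c) lies in A (i.e., φ(A) ⊆ A, A is characteristic in G). -/

import Mathlib

lemma zmod_dvd_of_nsmul_eq_zero (p n j : ℕ) (hp : 1 < p) (hj : j ≤ n)
    (z : ZMod (p ^ n)) (hz : (p ^ j : ℕ) • z = 0) :
    p ^ (n - j) ∣ z.val ∧ z.val / p ^ (n - j) < p ^ j := by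
  have hpn : NeZero (p ^ n) := ⟨pow_ne_zero _ (by omega)⟩
  have h1 : ((p ^ j * z.val : ℕ) : ZMod (p ^ n)) = 0 := by
    push_cast
    rw [ZMod.natCast_zmod_val]
    simpa [nsmul_eq_mul] using hz
  rw [ZMod.natCast_eq_zero_iff] at h1
  have hsplit : p ^ n = p ^ j * p ^ (n - j) := by rw [← pow_add]; congr 1; omega
  obtain ⟨c, hc⟩ := h1
  have hc' : p ^ j * z.val = p ^ j * (p ^ (n - j) * c) := by
    rw [hc, hsplit, mul_assoc]
  have hzval : z.val = p ^ (n - j) * c :=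
    Nat.eq_of_mul_eq_mul_left (by positivity) hc'
  refine ⟨⟨c, hzval⟩, ?_⟩
  have hlt : z.val < p ^ n := ZMod.val_lt z
  rw [Nat.div_lt_iff_lt_mul (by positivity)]
  calc z.val < p ^ n := hlt
    _ = p ^ j * p ^ (n-j) := hsplit

lemma zmod_torsion_card_le (p n j : ℕ) (hp : 1 < p) (hj : j ≤ n) :
    Nat.card {z : ZMod (p ^ n) × ZMod (p ^ n) // (p ^ j : ℕ) • z = 0} ≤ p ^ j * p ^ j := by
  have hpn : NeZero (p ^ n) := ⟨pow_ne_zero _ (by omega)⟩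
  have key := zmod_dvd_of_nsmul_eq_zero p n j hp hj
  set d := p ^ (n - j) with hd
  have hfst : ∀ z : {z : ZMod (p ^ n) × ZMod (p ^ n) // (p ^ j : ℕ) • z = 0},
      (p ^ j : ℕ) • z.1.1 = 0 ∧ (p ^ j : ℕ) • z.1.2 = 0 := by
    rintro ⟨⟨z1, z2⟩, hz⟩
    have h1 := congrArg Prod.fst hz
    have h2 := congrArg Prod.snd hz
    exact ⟨h1, h2⟩
  let F : {z : ZMod (p ^ n) × ZMod (p ^ n) // (p ^ j : ℕ) • z = 0} → Fin (p ^ j) × Fin (p ^ j) :=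
    fun z => (⟨z.1.1.val / d, (key z.1.1 (hfst z).1).2⟩, ⟨z.1.2.val / d, (key z.1.2 (hfst z).2).2⟩)
  have hFinj : Function.Injective F := by
    intro z w h
    have e1 : z.1.1.val / d = w.1.1.val / d := congrArg (fun t => t.1.val) h
    have e2 : z.1.2.val / d = w.1.2.val / d := congrArg (fun t => t.2.val) h
    have d1z := (key z.1.1 (hfst z).1).1
    have d1w := (key w.1.1 (hfst w).1).1
    have d2z := (key z.1.2 (hfst z).2).1
    have d2w := (key w.1.2 (hfst w).2).1
    have hv1 : z.1.1.val = w.1.1.val := by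
      rw [← Nat.div_mul_cancel d1z, ← Nat.div_mul_cancel d1w, e1]
    have hv2 : z.1.2.val = w.1.2.val := by
      rw [← Nat.div_mul_cancel d2z, ← Nat.div_mul_cancel d2w, e2]
    apply Subtype.ext
    exact Prod.ext (ZMod.val_injective _ hv1) (ZMod.val_injective _ hv2)
  calc Nat.card {z : ZMod (p ^ n) × ZMod (p ^ n) // (p ^ j : ℕ) • z = 0}
      ≤ Nat.card (Fin (p ^ j) × Fin (p ^ j)) := Nat.card_le_card_of_injective F hFinj
    _ = p ^ j * p ^ j := by simp [Nat.card_prod]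

lemma lte_helper (p k t : ℕ) (hp : p.Prime) (hodd : Odd p) (hk : k ≠ 0)
    (hdvd : p ^ t ∣ (1 + p) ^ k - 1) : t ≤ padicValNat p k + 1 := by
  haveI := Fact.mk hp
  have hp1 : 1 < p := hp.one_lt
  have hnd : ¬ p ∣ 1 + p := by
    intro h
    have : p ∣ 1 := by
      have := Nat.dvd_sub h dvd_rfl
      simpa using this
    exact Nat.Prime.one_lt hp |>.ne' (Nat.le_antisymm (Nat.le_of_dvd one_pos this) (by omega)) 
  have hval : padicValNat p ((1 + p) ^ k - 1 ^ k) =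
      padicValNat p ((1 + p) - 1) + padicValNat p k :=
    padicValNat.pow_sub_pow hodd (by omega) (by simp) hnd hk
  have hne : (1 + p) ^ k - 1 ≠ 0 := by
    have : 1 < (1 + p) ^ k := Nat.one_lt_pow hk (by omega)
    omega
  have ht := (padicValNat_dvd_iff_le hne).1 (by simpa using hdvd)
  simp only [one_pow] at hval
  rw [hval] at ht
  have : padicValNat p ((1 + p) - 1) = 1 := by
    simpa using padicValNat.self hp1
  omega


/-- Let `p` be an odd prime, `n ≥ 2`, and `G = A ⋊ ⟨x⟩` where `A ≅ Z_{p^n} × Z_{p^n}`,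
`x` has order `p^{n-1}` and acts on `A` by `c ↦ c^{1+p}`.  Then for every automorphism `φ`
of `G` and every `c ∈ A`, the element `c⁻¹ φ(c)` lies in `A` (i.e. `A` is characteristic). -/
theorem A_is_characteristic (p n : ℕ) (hp : p.Prime) (hodd : Odd p)
    (hn : 2 ≤ n) (G : Type*) [Group G] [Finite G] (A : Subgroup G) (x : G)
    (hAnorm : A.Normal)
    (hcompl : Subgroup.IsComplement' A (Subgroup.zpowers x))
    (hAiso : Nonempty (A ≃* Multiplicative (ZMod (p ^ n) × ZMod (p ^ n))))
    (hx : orderOf x = p ^ (n - 1))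
    (hact : ∀ c ∈ A, x⁻¹ * c * x = c ^ (1 + p)) :
    ∀ φ : G ≃* G, ∀ c ∈ A, c⁻¹ * φ c ∈ A := by
  obtain ⟨e⟩ := hAiso
  haveI := Fact.mk hp
  have hp1 : 1 < p := hp.one_lt
  -- A is commutative
  have hAcomm : ∀ u v : ↥A, u * v = v * u := fun u v =>
    e.injective (by rw [map_mul, map_mul, mul_comm])
  -- exponent of A
  have hAexp : ∀ a : ↥A, a ^ (p ^ n) = 1 := by
    intro a
    apply e.injective
    rw [map_pow, map_one]
    have : ∀ y : Multiplicative (ZMod (p ^ n) × ZMod (p ^ n)), y ^ (p ^ n) = 1 := by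
      intro y
      have : (p ^ n : ℕ) • y.toAdd = 0 := by
        have : ((p ^ n : ℕ) : ZMod (p ^ n)) = 0 := by
          simp [ZMod.natCast_self]
        ext <;> simp only [Prod.smul_fst, Prod.smul_snd, Prod.fst_zero, Prod.snd_zero] <;> rw [nsmul_eq_mul, this, zero_mul]
      apply Multiplicative.toAdd.injective
      simp [toAdd_pow, this]
    exact this _
  -- conjugation formula
  have hconj : ∀ k : ℕ, ∀ c ∈ A, (x ^ k)⁻¹ * c * x ^ k = c ^ ((1 + p) ^ k) := by
    intro k
    induction k with
    | zero => intro c hc; simp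
    | succ k ih =>
      intro c hc
      have hck : c ^ ((1 + p) ^ k) ∈ A := A.pow_mem hc _
      calc (x ^ (k+1))⁻¹ * c * x ^ (k+1)
          = x⁻¹ * ((x ^ k)⁻¹ * c * x ^ k) * x := by
            rw [pow_succ, mul_inv_rev]; group
        _ = x⁻¹ * (c ^ ((1 + p) ^ k)) * x := by rw [ih c hc]
        _ = (c ^ ((1 + p) ^ k)) ^ (1 + p) := hact _ hck
        _ = c ^ ((1 + p) ^ (k+1)) := by rw [← pow_mul, ← pow_succ]
  intro φ c hc
  set B := A.map (φ : G →* G) with hB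
  suffices hBA : B ≤ A by
    exact A.mul_mem (A.inv_mem hc) (hBA ⟨c, hc, rfl⟩)
  by_contra hnot
  -- the quotient
  haveI := hAnorm
  set π := QuotientGroup.mk' A with hπ
  have hker : π.ker = A := QuotientGroup.ker_mk' A
  have hmemA : ∀ g : G, π g = 1 ↔ g ∈ A := by
    intro g
    exact QuotientGroup.eq_one_iff g
  -- cardinalities
  have hpn0 : (0:ℕ) < p ^ n := by positivity
  have hcardA : Nat.card ↥A = p ^ n * p ^ n := by
    rw [Nat.card_congr e.toEquiv, Nat.card_congr Multiplicative.toAdd, Nat.card_prod,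
      Nat.card_zmod]
  -- order of π x
  have hxA : ∀ m : ℕ, x ^ m ∈ A → x ^ m = 1 := by
    intro m hm
    have h2 : x ^ m ∈ A ⊓ Subgroup.zpowers x := ⟨hm, Subgroup.zpowers x |>.pow_mem (Subgroup.mem_zpowers x) m⟩
    rw [hcompl.disjoint.eq_bot] at h2
    exact h2
  have horderπx : orderOf (π x) = p ^ (n - 1) := by
    apply Nat.dvd_antisymm
    · apply orderOf_dvd_of_pow_eq_one
      rw [← map_pow, ← hx, pow_orderOf_eq_one, map_one]
    · rw [← hx]
      apply orderOf_dvd_of_pow_eq_one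
      have : x ^ orderOf (π x) ∈ A := by
        rw [← hmemA, map_pow, pow_orderOf_eq_one]
      exact hxA _ this
  have hcardQ : Nat.card (G ⧸ A) = p ^ (n - 1) := by
    have h1 : Nat.card G = Nat.card (G ⧸ A) * Nat.card ↥A :=
      Subgroup.card_eq_card_quotient_mul_card_subgroup A
    have h2 : Nat.card ↥A * Nat.card ↥(Subgroup.zpowers x) = Nat.card G := hcompl.card_mul
    have h3 : Nat.card ↥(Subgroup.zpowers x) = p ^ (n - 1) := by
      rw [Nat.card_zpowers, hx]
    have hA0 : Nat.card ↥A ≠ 0 := by rw [hcardA]; positivity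
    apply Nat.eq_of_mul_eq_mul_left (Nat.pos_of_ne_zero hA0)
    rw [← h3, h2, h1, mul_comm]
  haveI hQcyc : IsCyclic (G ⧸ A) := isCyclic_of_orderOf_eq_card (π x) (by rw [horderπx, hcardQ])
  have hQtop : Subgroup.zpowers (π x) = ⊤ := by
    apply Subgroup.eq_top_of_card_eq
    rw [Nat.card_zpowers, horderπx, hcardQ]
  -- the restriction of π to B
  set ψ : ↥B →* G ⧸ A := π.comp B.subtype with hψ
  have hRange : ψ.range = B.map π := by
    rw [hψ, MonoidHom.range_comp, Subgroup.range_subtype]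
  obtain ⟨gen, hgen⟩ := IsCyclic.exists_generator (α := ↥ψ.range)
  obtain ⟨b', hb'⟩ := MonoidHom.mem_range.mp gen.2
  set b : G := (b' : G) with hbdef
  have hπb : π b = (gen : G ⧸ A) := hb'
  have hbB : b ∈ B := b'.2
  have hgen1 : (gen : G ⧸ A) ≠ 1 := by
    intro h1
    apply hnot
    intro g hg
    have hgr : π g ∈ ψ.range := ⟨⟨g, hg⟩, rfl⟩
    obtain ⟨m, hm⟩ := Subgroup.mem_zpowers_iff.mp (hgen ⟨π g, hgr⟩)
    have hgq : π g = (gen : G ⧸ A) ^ m := by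
      have := congrArg Subtype.val hm
      simpa using this.symm
    rw [← hmemA, hgq, h1, one_zpow]
  have hmem : π b ∈ Subgroup.zpowers (π x) := by rw [hQtop]; trivial
  obtain ⟨jz, hjz⟩ := Subgroup.mem_zpowers_iff.mp hmem
  set M : ℕ := p ^ (n - 1) with hM
  have hM0 : (0:ℤ) < (M:ℤ) := by positivity
  set k : ℕ := (jz % (M : ℤ)).toNat with hk
  have hxk : x ^ jz = x ^ (k : ℕ) := by
    have h1 := zpow_mod_orderOf x jz
    rw [hx] at h1
    rw [← h1, ← zpow_natCast]
    congr 1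
    rw [hk]
    exact (Int.toNat_of_nonneg (Int.emod_nonneg _ (by omega))).symm
  have hπbk : π b = π (x ^ (k : ℕ)) := by
    rw [← hjz, ← map_zpow, hxk]
  have hk0 : k ≠ 0 := by
    intro h0
    apply hgen1
    rw [← hπb, hπbk, h0, pow_zero, map_one]
  have hklt : k < M := by
    have h1 := Int.emod_lt_of_pos jz hM0
    have h2 := Int.emod_nonneg jz (by omega : (M:ℤ) ≠ 0)
    omega
  set i := padicValNat p k with hi
  have hpi_dvd : p ^ i ∣ k := pow_padicValNat_dvd
  have hin2 : i ≤ n - 2 := by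
    have h1 : p ^ i ≤ k := Nat.le_of_dvd (Nat.pos_of_ne_zero hk0) hpi_dvd
    have h2 : p ^ i < p ^ (n-1) := lt_of_le_of_lt h1 hklt
    have h3 : i < n - 1 := (Nat.pow_lt_pow_iff_right hp1).1 h2
    omega
  have hgcd : Nat.gcd (p ^ (n-1)) k = p ^ i := by
    apply Nat.dvd_antisymm
    · obtain ⟨t, htle, ht⟩ := (Nat.dvd_prime_pow hp).1 (Nat.gcd_dvd_left (p^(n-1)) k)
      have h4 : p ^ t ∣ k := ht ▸ Nat.gcd_dvd_right _ _
      have h5 : t ≤ i := (padicValNat_dvd_iff_le hk0).1 h4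
      rw [ht]
      exact pow_dvd_pow p h5
    · exact Nat.dvd_gcd (pow_dvd_pow p (by omega)) hpi_dvd
  have horderb : orderOf (π b) = p ^ (n - 1 - i) := by
    rw [hπbk, map_pow, orderOf_pow, horderπx, hgcd]
    exact Nat.pow_div (by omega) (by omega)
  have hrange_eq : ψ.range = Subgroup.zpowers (π b) := by
    apply le_antisymm
    · intro q hq
      obtain ⟨m, hm⟩ := Subgroup.mem_zpowers_iff.mp (hgen ⟨q, hq⟩)
      refine Subgroup.mem_zpowers_iff.mpr ⟨m, ?_⟩
      rw [hπb]
      have := congrArg Subtype.val hm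
      simpa using this
    · rw [Subgroup.zpowers_le]
      exact ⟨b', hb'.trans hπb.symm⟩
  have hcardrange : Nat.card ψ.range = p ^ (n-1-i) := by
    rw [hrange_eq, Nat.card_zpowers, horderb]
  have hcardB : Nat.card ↥B = p ^ n * p ^ n := by
    rw [← hcardA]
    exact (Nat.card_congr (MulEquiv.subgroupMap φ A).toEquiv).symm
  have hdec : Nat.card ↥B = Nat.card ψ.range * Nat.card ψ.ker := by
    rw [Subgroup.card_eq_card_quotient_mul_card_subgroup ψ.ker,
      Nat.card_congr (QuotientGroup.quotientKerEquivRange ψ).toEquiv]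
  have hkerA : ∀ t : ψ.ker, ((t : ↥B) : G) ∈ A := fun t => (hmemA _).1 t.2
  have hkertor : ∀ t : ψ.ker, ((t : ↥B) : G) ^ (p ^ (i+1)) = 1 := by
    intro t
    set g : G := ((t : ↥B) : G) with hg
    have hgA : g ∈ A := hkerA t
    have hgB : g ∈ B := (t : ↥B).2
    have hcomm : g * b = b * g := by
      obtain ⟨a1, ha1, hga⟩ := hgB
      obtain ⟨a2, ha2, hba⟩ := hbB
      rw [← hga, ← hba, ← map_mul, ← map_mul]
      congr 1
      exact congrArg Subtype.val (hAcomm ⟨a1, ha1⟩ ⟨a2, ha2⟩)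
    have haA : b * (x ^ k)⁻¹ ∈ A := by
      rw [← hmemA, map_mul, map_inv, hπbk, mul_inv_cancel]
    obtain ⟨a, haA2, hbax⟩ : ∃ a, a ∈ A ∧ b = a * x ^ k :=
      ⟨b * (x ^ k)⁻¹, haA, (inv_mul_cancel_right b (x ^ k)).symm⟩
    have hga' : g * a = a * g := congrArg Subtype.val (hAcomm ⟨g, hgA⟩ ⟨a, haA2⟩)
    have hgx : (x ^ k)⁻¹ * g * x ^ k = g := by
      have h6 : g * (a * x ^ k) = (a * x ^ k) * g := by rw [← hbax]; exact hcomm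
      rw [← mul_assoc, hga', mul_assoc, mul_assoc] at h6
      have h8 : g * x ^ k = x ^ k * g := mul_left_cancel h6
      rw [mul_assoc, h8, ← mul_assoc, inv_mul_cancel, one_mul]
    have hpow : g ^ ((1+p)^k) = g := by rw [← hconj k g hgA, hgx]
    have hm1 : g ^ ((1+p)^k - 1) = 1 := by
      have h1 : 1 ≤ (1+p)^k := Nat.one_le_pow _ _ (by omega)
      rw [← Nat.sub_add_cancel h1, pow_succ] at hpow
      exact mul_right_cancel (hpow.trans (one_mul g).symm)
    have hordg : orderOf g ∣ p ^ n := by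
      apply orderOf_dvd_of_pow_eq_one
      have h9 := hAexp ⟨g, hgA⟩
      simpa using congrArg Subtype.val h9
    obtain ⟨t', ht'le, ht'⟩ := (Nat.dvd_prime_pow hp).1 hordg
    have hdvd2 : p ^ t' ∣ (1+p)^k - 1 := ht' ▸ orderOf_dvd_of_pow_eq_one hm1
    have ht'i : t' ≤ i + 1 := lte_helper p k t' hp hodd hk0 hdvd2
    have h10 : orderOf g ∣ p ^ (i+1) := ht' ▸ pow_dvd_pow p ht'i
    exact orderOf_dvd_iff_pow_eq_one.1 h10
  have htor2 : ∀ t : ψ.ker, (p ^ (i+1) : ℕ) • (e ⟨((t : ↥B) : G), hkerA t⟩).toAdd = 0 := by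
    intro t
    have h1 : (⟨((t : ↥B) : G), hkerA t⟩ : ↥A) ^ (p ^ (i+1)) = 1 := by
      apply Subtype.ext
      simpa using hkertor t
    have h2 : (e (⟨((t : ↥B) : G), hkerA t⟩ : ↥A)) ^ (p ^ (i+1)) = 1 := by
      rw [← map_pow, h1, map_one]
    have h3 := congrArg Multiplicative.toAdd h2
    rw [toAdd_pow] at h3
    simpa using h3
  let F : ψ.ker → {z : ZMod (p ^ n) × ZMod (p ^ n) // (p ^ (i+1) : ℕ) • z = 0} :=
    fun t => ⟨(e ⟨((t : ↥B) : G), hkerA t⟩).toAdd, htor2 t⟩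
  have hFinj : Function.Injective F := by
    intro t1 t2 h
    have h1 : (e ⟨((t1 : ↥B) : G), hkerA t1⟩).toAdd = (e ⟨((t2 : ↥B) : G), hkerA t2⟩).toAdd :=
      congrArg Subtype.val h
    have h2 := e.injective (Multiplicative.toAdd.injective h1)
    have h3 := Subtype.ext_iff.mp h2
    exact Subtype.ext (Subtype.ext h3)
  have hkercard : Nat.card ψ.ker ≤ p ^ (i+1) * p ^ (i+1) :=
    (Nat.card_le_card_of_injective F hFinj).trans
      (zmod_torsion_card_le p n (i+1) hp1 (by omega))
  have hfinal : p ^ n * p ^ n ≤ p ^ (n-1-i) * (p ^ (i+1) * p ^ (i+1)) := by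
    calc p^n * p^n = Nat.card ↥B := hcardB.symm
      _ = Nat.card ψ.range * Nat.card ψ.ker := hdec
      _ ≤ p^(n-1-i) * (p^(i+1)*p^(i+1)) := by
          rw [hcardrange]
          exact Nat.mul_le_mul_left _ hkercard
  have hexp : p ^ (n + n) ≤ p ^ ((n-1-i) + ((i+1) + (i+1))) := by
    rw [pow_add, pow_add, pow_add]
    simpa [mul_assoc] using hfinal
  have hle := (Nat.pow_le_pow_iff_right hp1).1 hexp
  omega
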